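/- Let u₁, u₂, u₃, u₄ ∈ S² be four points such that every three of them are linearly independent. Then the following are equivalent: (a) u₁, u₂, u₃, u₄ are not contained in any closed hemisphere; (b) −u₁ ∈ C(u₂,u₃,u₄); (c) sign[u₁,u₂,u₃] = sign[u₁,u₃,u₄] = −sign[u₁,u₂,u₄] = −sign[u₂,u₃,u₄] (all four determinants being nonzero). -/

import Mathlib

open scoped RealInnerProductSpace

noncomputable section

/-- ℝ³ as EuclideanSpace. -/
abbrev E3 : Type := EuclideanSpace ℝ (Fin 3)

/-- Determinant of the 3×3 matrix with columns u, v, w. -/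
def det3 (u v w : E3) : ℝ :=
  Matrix.det !![u 0, v 0, w 0; u 1, v 1, w 1; u 2, v 2, w 2]

/-- The minimizing great-circle arc joining two non-antipodal points of S². -/
def sphericalEdge (u v : E3) : Set E3 :=
  {p | ∃ a b : ℝ, 0 ≤ a ∧ 0 ≤ b ∧ (a ≠ 0 ∨ b ≠ 0) ∧
    p = ‖a • u + b • v‖⁻¹ • (a • u + b • v)}

/-- A spherical polygon: a cyclic sequence of distinct points of S² with consecutive
vertices non-antipodal. -/
def IsSphericalPolygon {n : ℕ} (u : ZMod n → E3) : Prop :=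
  (∀ i, ‖u i‖ = 1) ∧ Function.Injective u ∧ (∀ i, u (i + 1) ≠ -(u i))

/-- The i-th edge of a spherical polygon. -/
def polyEdge {n : ℕ} (u : ZMod n → E3) (i : ZMod n) : Set E3 :=
  sphericalEdge (u i) (u (i + 1))

/-- A spherical polygon is simple if non-adjacent edges are disjoint and adjacent
edges meet only in their common vertex. -/
def IsSimple {n : ℕ} (u : ZMod n → E3) : Prop :=
  (∀ i j : ZMod n, j ≠ i → j ≠ i + 1 → i ≠ j + 1 →
      Disjoint (polyEdge u i) (polyEdge u j)) ∧
  (∀ i : ZMod n, polyEdge u i ∩ polyEdge u (i + 1) = {u (i + 1)})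

/-- A family of points of S² is balanced if it is not contained in any closed
hemisphere. -/
def IsBalanced {ι : Type*} (u : ι → E3) : Prop :=
  ∀ w : E3, w ≠ 0 → ∃ i, ⟪u i, w⟫ < 0

/-- Points in general position: no three on a common great circle. -/
def GeneralPosition {ι : Type*} (u : ι → E3) : Prop :=
  ∀ i j k : ι, i ≠ j → i ≠ k → j ≠ k → det3 (u i) (u j) (u k) ≠ 0

/-- Spherical inflection of a spherical polygon at index i. -/
def Inflection {n : ℕ} (u : ZMod n → E3) (i : ZMod n) : Prop :=
  det3 (u (i - 1)) (u i) (u (i + 1)) * det3 (u i) (u (i + 1)) (u (i + 2)) < 0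

/-- The polygon Q − uᵢ obtained by deleting the vertex uᵢ, reindexed over ZMod (n-1),
starting at u_{i+1}. -/
def eraseVertex {n : ℕ} (u : ZMod n → E3) (i : ZMod n) : ZMod (n - 1) → E3 :=
  fun j => u (i + 1 + (j.val : ZMod n))

/-- The open cone spanned by three vectors. -/
def openCone3 (a b c : E3) : Set E3 :=
  {x | ∃ l₁ l₂ l₃ : ℝ, 0 < l₁ ∧ 0 < l₂ ∧ 0 < l₃ ∧ x = l₁ • a + l₂ • b + l₃ • c}

end


noncomputable def cross3 (u v : E3) : E3 :=
  (WithLp.equiv 2 (Fin 3 → ℝ)).symm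
    ![u 1 * v 2 - u 2 * v 1, u 2 * v 0 - u 0 * v 2, u 0 * v 1 - u 1 * v 0]

lemma inner3 (x y : E3) : ⟪x, y⟫ = x 0 * y 0 + x 1 * y 1 + x 2 * y 2 := by
  simp [PiLp.inner_apply, Fin.sum_univ_three, RCLike.inner_apply, mul_comm]

lemma det3_eq (u v w : E3) : det3 u v w =
    u 0 * (v 1 * w 2 - v 2 * w 1) - v 0 * (u 1 * w 2 - u 2 * w 1)
      + w 0 * (u 1 * v 2 - u 2 * v 1) := by
  simp [det3, Matrix.det_fin_three]; ring

lemma inner_cross3 (x u v : E3) : ⟪x, cross3 u v⟫ = det3 u v x := by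
  simp [inner3, cross3, WithLp.equiv_symm_apply, WithLp.ofLp_toLp, det3_eq, Fin.sum_univ_three]; ring

lemma det3_cyc (u v w : E3) : det3 w u v = det3 u v w := by rw [det3_eq, det3_eq]; ring

lemma det3_self12 (u v : E3) : det3 u v u = 0 := by rw [det3_eq]; ring

lemma det3_self22 (u v : E3) : det3 u v v = 0 := by rw [det3_eq]; ring

lemma det3_swap23 (u v w : E3) : det3 u w v = -det3 u v w := by rw [det3_eq, det3_eq]; ring

lemma det3_ne_zero {v₁ v₂ v₃ : E3} (h : LinearIndependent ℝ ![v₁, v₂, v₃]) :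
    det3 v₁ v₂ v₃ ≠ 0 := by
  intro h0
  obtain ⟨g, hgne, hg⟩ := Matrix.exists_mulVec_eq_zero_iff.mpr h0
  refine hgne ?_
  have := Fintype.linearIndependent_iff.mp h g ?_
  · funext i; exact this i
  · have h0' : ∀ i : Fin 3,
        g 0 * v₁ i + g 1 * v₂ i + g 2 * v₃ i = 0 := by
      intro i
      have := congrFun hg i
      fin_cases i <;>
        · simp [Matrix.mulVec, dotProduct, Fin.sum_univ_three] at this
          simp only [Fin.zero_eta, Fin.mk_one, Fin.reduceFinMk]
          linear_combination this
    ext i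
    simp only [Fin.sum_univ_three, Matrix.cons_val_zero, Matrix.cons_val_one, Matrix.head_cons,
      Matrix.cons_val_two, Matrix.tail_cons, PiLp.add_apply, PiLp.smul_apply, smul_eq_mul,
      PiLp.zero_apply]
    exact h0' i

lemma cramer3 (u₁ u₂ u₃ u₄ : E3) :
    (det3 u₂ u₃ u₄) • u₁ =
      (det3 u₁ u₃ u₄) • u₂ - (det3 u₁ u₂ u₄) • u₃ + (det3 u₁ u₂ u₃) • u₄ := by
  ext i
  fin_cases i <;>
    · simp only [PiLp.smul_apply, PiLp.add_apply, PiLp.sub_apply, smul_eq_mul, det3_eq,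
        Fin.zero_eta, Fin.mk_one, Fin.reduceFinMk]
      ring

lemma orth_basis_zero {v₁ v₂ v₃ w : E3} (hd : det3 v₁ v₂ v₃ ≠ 0)
    (o1 : ⟪v₁, w⟫ = 0) (o2 : ⟪v₂, w⟫ = 0) (o3 : ⟪v₃, w⟫ = 0) : w = 0 := by
  by_contra hw
  apply hd
  set M : Matrix (Fin 3) (Fin 3) ℝ := !![v₁ 0, v₁ 1, v₁ 2; v₂ 0, v₂ 1, v₂ 2; v₃ 0, v₃ 1, v₃ 2]
  have hdet : M.det = det3 v₁ v₂ v₃ := by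
    simp [M, det3, Matrix.det_fin_three]; ring
  rw [← hdet]
  apply Matrix.exists_mulVec_eq_zero_iff.mp
  refine ⟨fun i => w i, ?_, ?_⟩
  · intro h
    apply hw
    ext i
    exact congrFun h i
  · funext i
    rw [inner3] at o1 o2 o3
    fin_cases i <;>
      simpa [M, Matrix.mulVec, dotProduct, Fin.sum_univ_three] using by assumption

lemma sign_eq_iff {a b : ℝ} (ha : a ≠ 0) (hb : b ≠ 0) :
    Real.sign a = Real.sign b ↔ 0 < a * b := by
  rcases ha.lt_or_gt with h1 | h1 <;> rcases hb.lt_or_gt with h2 | h2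
  · simp [Real.sign_of_neg h1, Real.sign_of_neg h2, mul_pos_of_neg_of_neg h1 h2]
  · simp only [Real.sign_of_neg h1, Real.sign_of_pos h2]
    constructor
    · intro h; norm_num at h
    · intro h; exfalso; nlinarith
  · simp only [Real.sign_of_pos h1, Real.sign_of_neg h2]
    constructor
    · intro h; norm_num at h
    · intro h; exfalso; nlinarith
  · simp [Real.sign_of_pos h1, Real.sign_of_pos h2, mul_pos h1 h2]

lemma sign_eq_neg_iff {a b : ℝ} (ha : a ≠ 0) (hb : b ≠ 0) :
    Real.sign a = -Real.sign b ↔ a * b < 0 := by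
  rcases ha.lt_or_gt with h1 | h1 <;> rcases hb.lt_or_gt with h2 | h2
  · simp only [Real.sign_of_neg h1, Real.sign_of_neg h2]
    constructor
    · intro h; norm_num at h
    · intro h; exfalso; nlinarith
  · simp [Real.sign_of_neg h1, Real.sign_of_pos h2, mul_neg_of_neg_of_pos h1 h2]
  · simp [Real.sign_of_pos h1, Real.sign_of_neg h2, mul_neg_of_pos_of_neg h1 h2]
  · simp only [Real.sign_of_pos h1, Real.sign_of_pos h2]
    constructor
    · intro h; norm_num at h
    · intro h; exfalso; nlinarith


set_option maxHeartbeats 1000000 in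
/-- For four points of S², every three of which are linearly
independent, the following are equivalent: (a) they are not contained in any closed
hemisphere; (b) −u₁ lies in the open cone C(u₂,u₃,u₄); (c) the sign relations
sign[u₁,u₂,u₃] = sign[u₁,u₃,u₄] = −sign[u₁,u₂,u₄] = −sign[u₂,u₃,u₄] hold. -/
theorem stmt_4 (u₁ u₂ u₃ u₄ : E3)
    (h₁ : ‖u₁‖ = 1) (h₂ : ‖u₂‖ = 1) (h₃ : ‖u₃‖ = 1) (h₄ : ‖u₄‖ = 1)
    (hind : ∀ i j k : Fin 4, i ≠ j → i ≠ k → j ≠ k →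
      LinearIndependent ℝ ![![u₁, u₂, u₃, u₄] i, ![u₁, u₂, u₃, u₄] j, ![u₁, u₂, u₃, u₄] k]) :
    (IsBalanced ![u₁, u₂, u₃, u₄] ↔ -u₁ ∈ openCone3 u₂ u₃ u₄) ∧
    (IsBalanced ![u₁, u₂, u₃, u₄] ↔
      (Real.sign (det3 u₁ u₂ u₃) = Real.sign (det3 u₁ u₃ u₄) ∧
       Real.sign (det3 u₁ u₂ u₃) = - Real.sign (det3 u₁ u₂ u₄) ∧
       Real.sign (det3 u₁ u₂ u₃) = - Real.sign (det3 u₂ u₃ u₄))) := by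
  have hI234 : LinearIndependent ℝ ![u₂, u₃, u₄] := by
    have := hind 1 2 3 (by decide) (by decide) (by decide); simpa using this
  have hd123 : det3 u₁ u₂ u₃ ≠ 0 := det3_ne_zero (by
    have := hind 0 1 2 (by decide) (by decide) (by decide); simpa using this)
  have hd124 : det3 u₁ u₂ u₄ ≠ 0 := det3_ne_zero (by
    have := hind 0 1 3 (by decide) (by decide) (by decide); simpa using this)
  have hd134 : det3 u₁ u₃ u₄ ≠ 0 := det3_ne_zero (by
    have := hind 0 2 3 (by decide) (by decide) (by decide); simpa using this)
  have hD : det3 u₂ u₃ u₄ ≠ 0 := det3_ne_zero hI234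
  set d123 := det3 u₁ u₂ u₃ with hd123def
  set d124 := det3 u₁ u₂ u₄ with hd124def
  set d134 := det3 u₁ u₃ u₄ with hd134def
  set D := det3 u₂ u₃ u₄ with hDdef
  set c₂ : ℝ := -(d134 / D) with hc₂def
  set c₃ : ℝ := d124 / D with hc₃def
  set c₄ : ℝ := -(d123 / D) with hc₄def
  -- Cramer decomposition of -u₁
  have key : -u₁ = c₂ • u₂ + c₃ • u₃ + c₄ • u₄ := by
    have h := cramer3 u₁ u₂ u₃ u₄
    rw [← hd123def, ← hd124def, ← hd134def, ← hDdef] at h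
    apply smul_right_injective E3 hD
    have hx2 : D * c₂ = -d134 := by rw [hc₂def]; field_simp; try ring
    have hx3 : D * c₃ = d124 := by rw [hc₃def]; field_simp; try ring
    have hx4 : D * c₄ = -d123 := by rw [hc₄def]; field_simp; try ring
    show D • (-u₁) = D • (c₂ • u₂ + c₃ • u₃ + c₄ • u₄)
    rw [smul_neg, h, smul_add, smul_add, smul_smul, smul_smul, smul_smul, hx2, hx3, hx4]
    module
  -- P: the positivity conditions
  have hP2 : (0 < c₂) ↔ d134 * D < 0 := by
    rw [hc₂def, neg_pos, div_neg_iff, mul_neg_iff]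
  have hP3 : (0 < c₃) ↔ 0 < d124 * D := by
    rw [hc₃def, div_pos_iff, mul_pos_iff]
  have hP4 : (0 < c₄) ↔ d123 * D < 0 := by
    rw [hc₄def, neg_pos, div_neg_iff, mul_neg_iff]
  -- Balanced → positivity
  have bal_to_pos : IsBalanced ![u₁, u₂, u₃, u₄] → 0 < c₂ ∧ 0 < c₃ ∧ 0 < c₄ := by
    intro hb
    have hc₂ne : c₂ ≠ 0 := by
      simp only [hc₂def, neg_ne_zero]; exact div_ne_zero hd134 hD
    have hc₃ne : c₃ ≠ 0 := div_ne_zero hd124 hD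
    have hc₄ne : c₄ ≠ 0 := by
      simp only [hc₄def, neg_ne_zero]; exact div_ne_zero hd123 hD
    refine ⟨?_, ?_, ?_⟩
    · -- c₂ > 0, else use w = D • cross3 u₃ u₄
      rcases hc₂ne.lt_or_gt with hneg | hpos
      swap; · exact hpos
      exfalso
      have h2' : 0 < D * d134 := by
        rw [hc₂def, neg_lt_zero, div_pos_iff] at hneg
        rcases hneg with ⟨ha, hb'⟩ | ⟨ha, hb'⟩ <;> nlinarith
      set w : E3 := D • cross3 u₃ u₄ with hw
      have i1 : ⟪u₁, w⟫ = D * d134 := by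
        rw [hw, real_inner_smul_right, inner_cross3, ← det3_cyc, ← hd134def]
      have i2 : ⟪u₂, w⟫ = D * D := by
        rw [hw, real_inner_smul_right, inner_cross3, ← det3_cyc, ← hDdef]
      have i3 : ⟪u₃, w⟫ = 0 := by
        rw [hw, real_inner_smul_right, inner_cross3, det3_self12, mul_zero]
      have i4 : ⟪u₄, w⟫ = 0 := by
        rw [hw, real_inner_smul_right, inner_cross3, det3_self22, mul_zero]
      have hwne : w ≠ 0 := by
        intro h0; rw [h0, inner_zero_right] at i2; exact hD (by nlinarith)
      obtain ⟨i, hi⟩ := hb w hwne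
      fin_cases i <;> simp only [Matrix.cons_val_zero, Matrix.cons_val_one, Matrix.head_cons,
        Matrix.cons_val_two, Matrix.tail_cons, Matrix.cons_val_three, Fin.zero_eta, Fin.mk_one,
        Fin.reduceFinMk] at hi <;> nlinarith
    · -- c₃ > 0, else use w = (-D) • cross3 u₂ u₄
      rcases hc₃ne.lt_or_gt with hneg | hpos
      swap; · exact hpos
      exfalso
      have h2' : 0 < (-D) * d124 := by
        rw [hc₃def, div_neg_iff] at hneg
        rcases hneg with ⟨ha, hb'⟩ | ⟨ha, hb'⟩ <;> nlinarith
      set w : E3 := (-D) • cross3 u₂ u₄ with hw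
      have i1 : ⟪u₁, w⟫ = (-D) * d124 := by
        rw [hw, real_inner_smul_right, inner_cross3, ← det3_cyc, ← hd124def]
      have i2 : ⟪u₂, w⟫ = 0 := by
        rw [hw, real_inner_smul_right, inner_cross3, det3_self12, mul_zero]
      have i3 : ⟪u₃, w⟫ = D * D := by
        rw [hw, real_inner_smul_right, inner_cross3, det3_swap23, ← hDdef]
        ring
      have i4 : ⟪u₄, w⟫ = 0 := by
        rw [hw, real_inner_smul_right, inner_cross3, det3_self22, mul_zero]
      have hwne : w ≠ 0 := by
        intro h0; rw [h0, inner_zero_right] at i3; exact hD (by nlinarith)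
      obtain ⟨i, hi⟩ := hb w hwne
      fin_cases i <;> simp only [Matrix.cons_val_zero, Matrix.cons_val_one, Matrix.head_cons,
        Matrix.cons_val_two, Matrix.tail_cons, Matrix.cons_val_three, Fin.zero_eta, Fin.mk_one,
        Fin.reduceFinMk] at hi <;> nlinarith
    · -- c₄ > 0, else use w = D • cross3 u₂ u₃
      rcases hc₄ne.lt_or_gt with hneg | hpos
      swap; · exact hpos
      exfalso
      have h2' : 0 < D * d123 := by
        rw [hc₄def, neg_lt_zero, div_pos_iff] at hneg
        rcases hneg with ⟨ha, hb'⟩ | ⟨ha, hb'⟩ <;> nlinarith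
      set w : E3 := D • cross3 u₂ u₃ with hw
      have i1 : ⟪u₁, w⟫ = D * d123 := by
        rw [hw, real_inner_smul_right, inner_cross3, ← det3_cyc, ← hd123def]
      have i2 : ⟪u₂, w⟫ = 0 := by
        rw [hw, real_inner_smul_right, inner_cross3, det3_self12, mul_zero]
      have i3 : ⟪u₃, w⟫ = 0 := by
        rw [hw, real_inner_smul_right, inner_cross3, det3_self22, mul_zero]
      have i4 : ⟪u₄, w⟫ = D * D := by
        rw [hw, real_inner_smul_right, inner_cross3, ← hDdef]
      have hwne : w ≠ 0 := by
        intro h0; rw [h0, inner_zero_right] at i4; exact hD (by nlinarith)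
      obtain ⟨i, hi⟩ := hb w hwne
      fin_cases i <;> simp only [Matrix.cons_val_zero, Matrix.cons_val_one, Matrix.head_cons,
        Matrix.cons_val_two, Matrix.tail_cons, Matrix.cons_val_three, Fin.zero_eta, Fin.mk_one,
        Fin.reduceFinMk] at hi <;> nlinarith
  -- positivity → Balanced
  have pos_to_bal : (0 < c₂ ∧ 0 < c₃ ∧ 0 < c₄) → IsBalanced ![u₁, u₂, u₃, u₄] := by
    rintro ⟨p2, p3, p4⟩ w hw
    by_contra hcon
    push_neg at hcon
    have g1 : 0 ≤ ⟪u₁, w⟫ := by simpa using hcon 0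
    have g2 : 0 ≤ ⟪u₂, w⟫ := by simpa using hcon 1
    have g3 : 0 ≤ ⟪u₃, w⟫ := by simpa using hcon 2
    have g4 : 0 ≤ ⟪u₄, w⟫ := by simpa using hcon 3
    have hsum : -⟪u₁, w⟫ = c₂ * ⟪u₂, w⟫ + c₃ * ⟪u₃, w⟫ + c₄ * ⟪u₄, w⟫ := by
      rw [← inner_neg_left, key, inner_add_left, inner_add_left, real_inner_smul_left,
        real_inner_smul_left, real_inner_smul_left]
    have e2 : ⟪u₂, w⟫ = 0 := by nlinarith
    have e3 : ⟪u₃, w⟫ = 0 := by nlinarith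
    have e4 : ⟪u₄, w⟫ = 0 := by nlinarith
    exact hw (orth_basis_zero hD e2 e3 e4)
  -- cone membership ↔ positivity
  have cone_iff : -u₁ ∈ openCone3 u₂ u₃ u₄ ↔ (0 < c₂ ∧ 0 < c₃ ∧ 0 < c₄) := by
    constructor
    · rintro ⟨l₁, l₂, l₃, hl₁, hl₂, hl₃, heq⟩
      have hsum : (l₁ - c₂) • u₂ + (l₂ - c₃) • u₃ + (l₃ - c₄) • u₄ = 0 := by
        have h' : (l₁ - c₂) • u₂ + (l₂ - c₃) • u₃ + (l₃ - c₄) • u₄ =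
            (l₁ • u₂ + l₂ • u₃ + l₃ • u₄) - (c₂ • u₂ + c₃ • u₃ + c₄ • u₄) := by
          module
        rw [h', ← heq, ← key, sub_self]
      have := Fintype.linearIndependent_iff.mp hI234 ![l₁ - c₂, l₂ - c₃, l₃ - c₄] (by
        simpa [Fin.sum_univ_three] using hsum)
      have e1 := this 0; have e2 := this 1; have e3 := this 2
      simp at e1 e2 e3
      refine ⟨?_, ?_, ?_⟩ <;> [rw [← show l₁ = c₂ by linarith]; rw [← show l₂ = c₃ by linarith];
        rw [← show l₃ = c₄ by linarith]] <;> assumption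
    · rintro ⟨p2, p3, p4⟩
      exact ⟨c₂, c₃, c₄, p2, p3, p4, key⟩
  -- sign conditions ↔ positivity
  have sign_iff : (Real.sign d123 = Real.sign d134 ∧ Real.sign d123 = -Real.sign d124 ∧
      Real.sign d123 = -Real.sign D) ↔ (0 < c₂ ∧ 0 < c₃ ∧ 0 < c₄) := by
    rw [sign_eq_iff hd123 hd134, sign_eq_neg_iff hd123 hd124, sign_eq_neg_iff hd123 hD,
      hP2, hP3, hP4]
    have hsq : 0 < d123 * d123 := mul_self_pos.mpr hd123
    have hsqD : 0 < D * D := mul_self_pos.mpr hD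
    constructor
    · rintro ⟨e1, e2, e3⟩
      refine ⟨?_, ?_, e3⟩
      · nlinarith [mul_pos e1 (neg_pos.mpr e3), hsq]
      · nlinarith [mul_pos_of_neg_of_neg e2 e3, hsq]
    · rintro ⟨f1, f2, f3⟩
      refine ⟨?_, ?_, f3⟩
      · nlinarith [mul_pos_of_neg_of_neg f3 f1, hsqD]
      · nlinarith [mul_pos f2 (neg_pos.mpr f3), hsqD]
  constructor
  · rw [cone_iff]
    exact ⟨bal_to_pos, pos_to_bal⟩
  · rw [sign_iff]
    exact ⟨bal_to_pos, pos_to_bal⟩
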